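/- S_odd(n, k) equals the number of pairs (ℓ, π) where π is a partition of {1,...,n} into k blocks B_1,...,B_k with min(B_1) < ... < min(B_k), and ℓ ∈ {1,...,n} satisfies min(B_ℓ) = ℓ. -/

import Mathlib

/-- Stirling numbers of odd type of the second kind:
S_odd(n,k) = S_odd(n-1,k-1) + k·S_odd(n-1,k) + δ_{n,k}, S_odd(0,0) = 0,
S_odd(n,k) = 0 for n < k. -/
def Sodd : ℕ → ℕ → ℕ
  | 0, _ => 0
  | _ + 1, 0 => 0
  | n + 1, k + 1 => Sodd n k + (k + 1) * Sodd n (k + 1) + if n = k then 1 else 0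

/-- Stirling numbers of odd type of the first kind:
s_odd(n,k) = s_odd(n-1,k-1) + (n-1)·s_odd(n-1,k) + δ_{n,k}, s_odd(0,0) = 0,
s_odd(n,k) = 0 for n < k. -/
def sodd : ℕ → ℕ → ℕ
  | 0, _ => 0
  | n + 1, 0 => n * sodd n 0
  | n + 1, k + 1 => sodd n k + n * sodd n (k + 1) + if n = k then 1 else 0

open Finset

lemma get_ge_of_sorted (L : List (WithTop ℕ)) (hs : L.SortedLT)
    (h1 : ∀ x ∈ L, WithTop.some 1 ≤ x) (j : ℕ) (hj : j < L.length) :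
    WithTop.some (j + 1) ≤ L.get ⟨j, hj⟩ := by
  induction j with
  | zero => exact h1 _ (L.get_mem _)
  | succ j ih =>
    have hj' : j < L.length := by omega
    have h2 : L.get ⟨j, hj'⟩ < L.get ⟨j + 1, hj⟩ :=
      hs.strictMono_get (by exact Fin.mk_lt_mk.2 (by omega))
    have h4 : WithTop.some (j + 1) < L.get ⟨j + 1, hj⟩ := lt_of_le_of_lt (ih hj') h2
    cases hx : L.get ⟨j + 1, hj⟩ with
    | top => exact le_top
    | coe m =>
      rw [hx] at h4
      have h5 : j + 1 < m := WithTop.coe_lt_coe.1 h4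
      exact WithTop.coe_le_coe.2 (by omega)

lemma sort_getD_eq_iff (M : Finset (WithTop ℕ))
    (h1 : ∀ x ∈ M, ∃ m : ℕ, 1 ≤ m ∧ x = WithTop.some m) (ℓ : ℕ) (hℓ : 1 ≤ ℓ) :
    ((M.sort (· ≤ ·)).getD (ℓ - 1) ⊥ = (ℓ : WithBot ℕ)) ↔
      ∀ i ∈ Finset.Icc 1 ℓ, (i : WithBot ℕ) ∈ M := by
  have hcast : ∀ m : ℕ, ((m : ℕ) : WithBot ℕ) = (WithTop.some m : WithTop ℕ) :=
    fun m => Nat.cast_withBot m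
  have hbot : (⊥ : WithTop ℕ) = WithTop.some 0 := rfl
  simp only [hcast]
  set L := M.sort (· ≤ ·) with hL
  have hs : L.SortedLT := M.sortedLT_sort
  have h1' : ∀ x ∈ L, WithTop.some 1 ≤ x := by
    intro x hx
    obtain ⟨m, hm1, rfl⟩ := h1 x ((Finset.mem_sort _).1 hx)
    exact WithTop.coe_le_coe.2 hm1
  constructor
  · intro h i hi
    rw [Finset.mem_Icc] at hi
    have hlen : ℓ - 1 < L.length := by
      by_contra hc
      rw [List.getD_eq_default _ _ (by omega), hbot] at h
      have := WithTop.coe_injective h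
      omega
    have key : ∀ t, t ≤ ℓ - 1 → L.getD (ℓ - 1 - t) ⊥ = WithTop.some (ℓ - t) := by
      intro t
      induction t with
      | zero => intro _; simpa using h
      | succ t ih =>
        intro ht
        have ihv := ih (by omega)
        have hi1 : ℓ - 1 - (t + 1) < L.length := by omega
        have hi2 : ℓ - 1 - t < L.length := by omega
        have hlt : L.get ⟨ℓ - 1 - (t + 1), hi1⟩ < L.get ⟨ℓ - 1 - t, hi2⟩ :=
          hs.strictMono_get (by exact Fin.mk_lt_mk.2 (by omega))
        rw [List.getD_eq_get L _ ⟨_, hi2⟩] at ihv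
        rw [ihv] at hlt
        have hge := get_ge_of_sorted L hs h1' _ hi1
        rw [List.getD_eq_get L _ ⟨_, hi1⟩]
        cases hx : L.get ⟨ℓ - 1 - (t + 1), hi1⟩ with
        | top => rw [hx] at hlt; exact absurd hlt (by simp)
        | coe m =>
          rw [hx] at hlt hge
          have hm1 : m < ℓ - t := WithTop.coe_lt_coe.1 hlt
          have hm2 : ℓ - 1 - (t + 1) + 1 ≤ m := WithTop.coe_le_coe.1 hge
          exact congrArg _ (by omega)
    have hkey := key (ℓ - i) (by omega)
    have he1 : ℓ - 1 - (ℓ - i) = i - 1 := by omega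
    have he2 : ℓ - (ℓ - i) = i := by omega
    rw [he1, he2] at hkey
    have hir : i - 1 < L.length := by omega
    rw [List.getD_eq_get L _ ⟨_, hir⟩] at hkey
    show (WithTop.some i) ∈ M
    rw [← Finset.mem_sort (α := WithTop ℕ) (· ≤ ·), ← hL, ← hkey]
    exact L.get_mem _
  · intro h
    have key : ∀ i, i < ℓ → L.getD i ⊥ = WithTop.some (i + 1) := by
      intro i
      induction i using Nat.strong_induction_on with
      | _ i ih =>
        intro hiℓ
        have hmem : WithTop.some (i + 1) ∈ L := by
          rw [Finset.mem_sort (α := WithTop ℕ) (· ≤ ·)]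
          exact h _ (Finset.mem_Icc.2 ⟨by omega, by omega⟩)
        obtain ⟨j, hj⟩ := List.mem_iff_get.1 hmem
        have hge := get_ge_of_sorted L hs h1' j.1 j.2
        rw [Fin.eta, hj] at hge
        have hji : j.1 ≤ i := by
          have := WithTop.coe_le_coe.1 hge
          omega
        rcases eq_or_lt_of_le hji with heq | hlt
        · rw [List.getD_eq_get L _ ⟨i, heq ▸ j.2⟩, ← hj]
          congr 1
          exact Fin.ext heq.symm
        · have hih := ih j.1 hlt (by omega)
          rw [List.getD_eq_get L _ ⟨j.1, j.2⟩, Fin.eta, hj] at hih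
          have := WithTop.coe_injective hih
          omega
    have hkey := key (ℓ - 1) (by omega)
    rwa [Nat.sub_add_cancel hℓ] at hkey

variable {a : ℕ} {s : Finset ℕ}

/-- Add `a` as a singleton block. -/
def addS (ha : a ∉ s) (π : Finpartition s) : Finpartition (insert a s) :=
  π.extend (b := {a}) (by simp [Finset.bot_eq_empty])
    (by simp [Finset.disjoint_singleton_right, ha])
    (by rw [sup_comm]; ext x; simp [Finset.sup_eq_union])

lemma addS_parts (ha : a ∉ s) (π : Finpartition s) :
    (addS ha π).parts = insert {a} π.parts := rfl

/-- Add `a` to the block `t`. -/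
def addP (ha : a ∉ s) (π : Finpartition s) (t : Finset ℕ) (ht : t ∈ π.parts) :
    Finpartition (insert a s) where
  parts := insert (insert a t) (π.parts.erase t)
  supIndep := by
    rw [Finset.supIndep_iff_pairwiseDisjoint]
    intro x hx y hy hxy
    rw [Finset.mem_coe, Finset.mem_insert] at hx hy
    simp only [Function.onFun, id_eq]
    have hnotin : ∀ u ∈ π.parts, a ∉ u := fun u hu hau => ha (π.le hu hau)
    rcases hx with rfl | hx <;> rcases hy with rfl | hy
    · exact absurd rfl hxy
    · have hy' := Finset.mem_of_mem_erase hy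
      have hyt := Finset.ne_of_mem_erase hy
      rw [Finset.disjoint_insert_left]
      exact ⟨hnotin _ hy', π.disjoint ht hy' (Ne.symm hyt)⟩
    · have hx' := Finset.mem_of_mem_erase hx
      have hxt := Finset.ne_of_mem_erase hx
      rw [Finset.disjoint_insert_right]
      exact ⟨hnotin _ hx', π.disjoint hx' ht hxt⟩
    · exact π.disjoint (Finset.mem_of_mem_erase hx) (Finset.mem_of_mem_erase hy) hxy
  sup_parts := by
    rw [Finset.sup_insert]
    have h2 : (insert t (π.parts.erase t)).sup id = s := by
      rw [Finset.insert_erase ht, π.sup_parts]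
    rw [Finset.sup_insert] at h2
    simp only [id_eq] at h2 ⊢
    calc insert a t ⊔ (π.parts.erase t).sup id
        = insert a (t ⊔ (π.parts.erase t).sup id) := by
          ext x; simp only [Finset.sup_eq_union, Finset.mem_union, Finset.mem_insert]; tauto
      _ = insert a s := by rw [h2]
  bot_notMem := by
    simp only [Finset.bot_eq_empty, Finset.mem_insert]
    rintro (h | h)
    · exact absurd h.symm (Finset.insert_ne_empty a t)
    · exact π.bot_notMem (Finset.mem_of_mem_erase h)

lemma addP_parts (ha : a ∉ s) (π : Finpartition s) (t : Finset ℕ) (ht : t ∈ π.parts) :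
    (addP ha π t ht).parts = insert (insert a t) (π.parts.erase t) := rfl

/-- Remove `a` from a partition of `insert a s`. -/
def rem (ha : a ∉ s) (π : Finpartition (insert a s)) : Finpartition s :=
  (π.avoid {a}).copy (by rw [Finset.sdiff_singleton_eq_erase, Finset.erase_insert ha])

lemma rem_parts (ha : a ∉ s) (π : Finpartition (insert a s)) :
    (rem ha π).parts = (π.parts.image (· \ {a})).erase ∅ := by
  simp [rem, Finpartition.copy, Finpartition.avoid, Finpartition.ofErase]

lemma part_mem_a (ha : a ∉ s) (π : Finpartition (insert a s)) :
    π.part a ∈ π.parts ∧ a ∈ π.part a :=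
  ⟨π.part_mem.2 (mem_insert_self a s), π.mem_part (mem_insert_self a s)⟩

lemma not_mem_of_ne_part (ha : a ∉ s) (π : Finpartition (insert a s)) {u : Finset ℕ}
    (hu : u ∈ π.parts) (hne : u ≠ π.part a) : a ∉ u := by
  intro hau
  exact hne (π.part_eq_of_mem hu hau).symm

lemma rem_parts_of_singleton (ha : a ∉ s) (π : Finpartition (insert a s))
    (h : π.part a = {a}) : (rem ha π).parts = π.parts.erase {a} := by
  rw [rem_parts]
  ext x
  simp only [Finset.mem_erase, Finset.mem_image]
  constructor
  · rintro ⟨hx0, u, hu, rfl⟩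
    rcases eq_or_ne u (π.part a) with rfl | hne
    · rw [h] at hx0 ⊢
      simp at hx0
    · have hau : a ∉ u := not_mem_of_ne_part ha π hu hne
      rw [Finset.sdiff_singleton_eq_erase, Finset.erase_eq_of_notMem hau]
      exact ⟨fun hx => hne (hx ▸ h ▸ rfl), hu⟩
  · rintro ⟨hxa, hx⟩
    refine ⟨fun h0 => π.bot_notMem (by rw [Finset.bot_eq_empty, ← h0]; exact hx), x, hx, ?_⟩
    have hax : a ∉ x := not_mem_of_ne_part ha π hx (fun hh => hxa (hh.trans h))
    rw [Finset.sdiff_singleton_eq_erase, Finset.erase_eq_of_notMem hax]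

lemma rem_parts_of_not_singleton (ha : a ∉ s) (π : Finpartition (insert a s))
    (h : π.part a ≠ {a}) :
    (rem ha π).parts = insert ((π.part a).erase a) (π.parts.erase (π.part a)) := by
  obtain ⟨hmem, hamem⟩ := part_mem_a ha π
  rw [rem_parts]
  ext x
  simp only [Finset.mem_erase, Finset.mem_image, Finset.mem_insert]
  constructor
  · rintro ⟨hx0, u, hu, rfl⟩
    rcases eq_or_ne u (π.part a) with rfl | hne
    · left; rw [Finset.sdiff_singleton_eq_erase]
    · have hau : a ∉ u := not_mem_of_ne_part ha π hu hne
      rw [Finset.sdiff_singleton_eq_erase, Finset.erase_eq_of_notMem hau]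
      exact Or.inr ⟨hne, hu⟩
  · rintro (rfl | ⟨hne, hx⟩)
    · refine ⟨?_, π.part a, hmem, by rw [Finset.sdiff_singleton_eq_erase]⟩
      intro h0
      exact h (by rw [← Finset.insert_erase hamem, h0]; simp)
    · have hax : a ∉ x := not_mem_of_ne_part ha π hx hne
      exact ⟨fun h0 => π.bot_notMem (by rw [Finset.bot_eq_empty, ← h0]; exact hx), x, hx, by
        rw [Finset.sdiff_singleton_eq_erase, Finset.erase_eq_of_notMem hax]⟩

lemma singleton_a_not_mem (ha : a ∉ s) (π : Finpartition s) : {a} ∉ π.parts :=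
  fun h => ha (π.le h (Finset.mem_singleton_self a))

lemma insert_a_not_mem (ha : a ∉ s) (π : Finpartition s) (t : Finset ℕ) :
    insert a t ∉ π.parts := fun h => ha (π.le h (Finset.mem_insert_self a t))

lemma addS_part_a (ha : a ∉ s) (π : Finpartition s) : (addS ha π).part a = {a} :=
  Finpartition.part_eq_of_mem _ (by rw [addS_parts]; exact Finset.mem_insert_self _ _)
    (Finset.mem_singleton_self a)

lemma addP_part_a (ha : a ∉ s) (π : Finpartition s) (t : Finset ℕ) (ht : t ∈ π.parts) :
    (addP ha π t ht).part a = insert a t :=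
  Finpartition.part_eq_of_mem _ (by rw [addP_parts]; exact Finset.mem_insert_self _ _)
    (Finset.mem_insert_self a t)

lemma a_not_mem_of_mem_parts (ha : a ∉ s) (π : Finpartition s) {t : Finset ℕ}
    (ht : t ∈ π.parts) : a ∉ t := fun h => ha (π.le ht h)

lemma addP_part_ne (ha : a ∉ s) (π : Finpartition s) (t : Finset ℕ) (ht : t ∈ π.parts) :
    insert a t ≠ {a} := by
  obtain ⟨b, hb⟩ := π.nonempty_of_mem_parts ht
  intro h
  have hbs : b ∈ s := π.le ht hb
  have : b ∈ ({a} : Finset ℕ) := h ▸ Finset.mem_insert_of_mem hb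
  rw [Finset.mem_singleton] at this
  exact ha (this ▸ hbs)

lemma rem_addS (ha : a ∉ s) (π : Finpartition s) : rem ha (addS ha π) = π := by
  apply Finpartition.ext
  rw [rem_parts_of_singleton ha _ (addS_part_a ha π), addS_parts,
    Finset.erase_insert (singleton_a_not_mem ha π)]

lemma rem_addP (ha : a ∉ s) (π : Finpartition s) (t : Finset ℕ) (ht : t ∈ π.parts) :
    rem ha (addP ha π t ht) = π := by
  apply Finpartition.ext
  rw [rem_parts_of_not_singleton ha _ (by rw [addP_part_a]; exact addP_part_ne ha π t ht),
    addP_part_a, Finset.erase_insert (a_not_mem_of_mem_parts ha π ht), addP_parts,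
    Finset.erase_insert, Finset.insert_erase ht]
  intro h
  exact insert_a_not_mem ha π t (Finset.mem_of_mem_erase h)

lemma addS_rem (ha : a ∉ s) (π : Finpartition (insert a s)) (h : π.part a = {a}) :
    addS ha (rem ha π) = π := by
  apply Finpartition.ext
  rw [addS_parts, rem_parts_of_singleton ha π h,
    Finset.insert_erase (h ▸ (part_mem_a ha π).1)]

lemma erase_a_mem_rem (ha : a ∉ s) (π : Finpartition (insert a s)) (h : π.part a ≠ {a}) :
    (π.part a).erase a ∈ (rem ha π).parts := by
  rw [rem_parts_of_not_singleton ha π h]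
  exact Finset.mem_insert_self _ _

lemma erase_a_nonempty (ha : a ∉ s) (π : Finpartition (insert a s)) (h : π.part a ≠ {a}) :
    ((π.part a).erase a).Nonempty := by
  obtain ⟨hmem, hamem⟩ := part_mem_a ha π
  rcases Finset.eq_empty_or_nonempty ((π.part a).erase a) with he | hne
  · exact absurd (by rw [← Finset.insert_erase hamem, he]; simp) h
  · exact hne

lemma erase_a_not_mem_erase (ha : a ∉ s) (π : Finpartition (insert a s)) (h : π.part a ≠ {a}) :
    (π.part a).erase a ∉ π.parts.erase (π.part a) := by
  intro hmem'
  obtain ⟨b, hb⟩ := erase_a_nonempty ha π h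
  have h1 : (π.part a).erase a ∈ π.parts := Finset.mem_of_mem_erase hmem'
  have h2 : (π.part a).erase a ≠ π.part a := Finset.ne_of_mem_erase hmem'
  have hbu : b ∈ π.part a := Finset.mem_of_mem_erase hb
  exact (Finset.disjoint_left.1 (π.disjoint h1 (part_mem_a ha π).1 h2)) hb hbu

lemma addP_rem (ha : a ∉ s) (π : Finpartition (insert a s)) (h : π.part a ≠ {a}) :
    addP ha (rem ha π) ((π.part a).erase a) (erase_a_mem_rem ha π h) = π := by
  apply Finpartition.ext
  obtain ⟨hmem, hamem⟩ := part_mem_a ha π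
  rw [addP_parts, Finset.insert_erase hamem, rem_parts_of_not_singleton ha π h,
    Finset.erase_insert (erase_a_not_mem_erase ha π h), Finset.insert_erase hmem]

lemma addS_card (ha : a ∉ s) (π : Finpartition s) :
    (addS ha π).parts.card = π.parts.card + 1 := by
  rw [addS_parts, Finset.card_insert_of_notMem (singleton_a_not_mem ha π)]

lemma addP_card (ha : a ∉ s) (π : Finpartition s) (t : Finset ℕ) (ht : t ∈ π.parts) :
    (addP ha π t ht).parts.card = π.parts.card := by
  rw [addP_parts, Finset.card_insert_of_notMem
    (fun hc => insert_a_not_mem ha π t (Finset.mem_of_mem_erase hc)),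
    Finset.card_erase_of_mem ht]
  have : 1 ≤ π.parts.card := Finset.card_pos.2 ⟨t, ht⟩
  omega

lemma addS_min_image (ha : a ∉ s) (π : Finpartition s) :
    (addS ha π).parts.image Finset.min = insert (a : WithBot ℕ) (π.parts.image Finset.min) := by
  rw [addS_parts, Finset.image_insert, Finset.min_singleton]
  norm_cast

lemma addP_min_image (hlt : ∀ x ∈ s, x < a) (ha : a ∉ s) (π : Finpartition s) (t : Finset ℕ)
    (ht : t ∈ π.parts) :
    (addP ha π t ht).parts.image Finset.min = π.parts.image Finset.min := by
  have hmin : (insert a t).min = t.min := by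
    obtain ⟨b, hb⟩ := π.nonempty_of_mem_parts ht
    obtain ⟨m, hm⟩ := Finset.min_of_nonempty ⟨b, hb⟩
    have hms : m ∈ t := Finset.mem_of_min hm
    have hma : m < a := hlt m (π.le ht hms)
    rw [Finset.min_insert, hm]
    simp [min_eq_right, le_of_lt hma]
  rw [addP_parts, Finset.image_insert, hmin, ← Finset.image_insert, Finset.insert_erase ht]

/-- The minima condition: every `i ∈ [1, ℓ]` is the minimum of some block. -/
def mincond (ℓ : ℕ) {s : Finset ℕ} (π : Finpartition s) : Prop :=
  ∀ i ∈ Finset.Icc 1 ℓ, (i : WithBot ℕ) ∈ π.parts.image Finset.min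

/-- Number of partitions of `[1, n]` into `k` blocks satisfying the minima condition. -/
noncomputable def A (n ℓ k : ℕ) : ℕ :=
  Nat.card {π : Finpartition (Finset.Icc 1 n) // π.parts.card = k ∧ mincond ℓ π}

def copyEquiv {s s' : Finset ℕ} (h : s = s') : Finpartition s ≃ Finpartition s' where
  toFun π := π.copy h
  invFun π := π.copy h.symm
  left_inv π := by apply Finpartition.ext; simp [Finpartition.copy]
  right_inv π := by apply Finpartition.ext; simp [Finpartition.copy]

lemma copyEquiv_parts {s s' : Finset ℕ} (h : s = s') (π : Finpartition s) :
    (copyEquiv h π).parts = π.parts := rfl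

variable {ℓ k : ℕ}

/-- The main structural equivalence. -/
noncomputable def mainEquiv (ha : a ∉ s) (hlt : ∀ x ∈ s, x < a) (hℓ : ℓ < a) (k : ℕ) :
    ({π : Finpartition s // π.parts.card = k ∧ mincond ℓ π} ⊕
      Σ π : {π : Finpartition s // π.parts.card = k + 1 ∧ mincond ℓ π}, {t // t ∈ π.1.parts}) ≃
    {π : Finpartition (insert a s) // π.parts.card = k + 1 ∧ mincond ℓ π} where
  toFun x :=
    match x with
    | Sum.inl ⟨π, hc, hm⟩ => ⟨addS ha π, by rw [addS_card, hc], by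
        intro i hi
        rw [addS_min_image]
        exact Finset.mem_insert_of_mem (hm i hi)⟩
    | Sum.inr ⟨⟨π, hc, hm⟩, ⟨t, ht⟩⟩ => ⟨addP ha π t ht, by rw [addP_card]; exact hc, by
        intro i hi
        rw [addP_min_image hlt]
        exact hm i hi⟩
  invFun := fun ⟨ρ, hc, hm⟩ =>
    if h : ρ.part a = {a} then
      Sum.inl ⟨rem ha ρ, by
        have hρ := addS_rem ha ρ h
        constructor
        · have := addS_card ha (rem ha ρ)
          rw [hρ, hc] at this
          omega
        · intro i hi
          have hmi := hm i hi
          conv at hmi => rw [← hρ]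
          rw [addS_min_image] at hmi
          rcases Finset.mem_insert.1 hmi with heq | hmem
          · exfalso
            have hiℓ := (Finset.mem_Icc.1 hi).2
            have : i = a := by exact_mod_cast heq
            omega
          · exact hmem⟩
    else
      Sum.inr ⟨⟨rem ha ρ, by
        have hρ := addP_rem ha ρ h
        constructor
        · have := addP_card ha (rem ha ρ) _ (erase_a_mem_rem ha ρ h)
          rw [hρ, hc] at this
          omega
        · intro i hi
          have hmi := hm i hi
          conv at hmi => rw [← hρ]
          rw [addP_min_image hlt] at hmi
          exact hmi⟩, ⟨(ρ.part a).erase a, erase_a_mem_rem ha ρ h⟩⟩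
  left_inv x := by
    match x with
    | Sum.inl ⟨π, hc, hm⟩ =>
      simp only
      rw [dif_pos (addS_part_a ha π)]
      exact congrArg Sum.inl (Subtype.ext (rem_addS ha π))
    | Sum.inr ⟨⟨π, hc, hm⟩, ⟨t, ht⟩⟩ =>
      simp only
      rw [dif_neg (by rw [addP_part_a]; exact addP_part_ne ha π t ht)]
      apply congrArg Sum.inr
      have h1 : rem ha (addP ha π t ht) = π := rem_addP ha π t ht
      have h2 : ((addP ha π t ht).part a).erase a = t := by
        rw [addP_part_a, Finset.erase_insert (a_not_mem_of_mem_parts ha π ht)]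
      apply Sigma.ext
      · exact Subtype.ext h1
      · rw [Subtype.heq_iff_coe_eq (by intro x; simp only [h1])]
        exact h2
  right_inv := fun ⟨ρ, hc, hm⟩ => by
    by_cases h : ρ.part a = {a}
    · simp only
      rw [dif_pos h]
      exact Subtype.ext (addS_rem ha ρ h)
    · simp only
      rw [dif_neg h]
      exact Subtype.ext (addP_rem ha ρ h)

lemma A_rec (n ℓ k : ℕ) (h2 : ℓ ≤ n) :
    A (n + 1) ℓ (k + 1) = A n ℓ k + (k + 1) * A n ℓ (k + 1) := by
  classical
  have ha : (n + 1) ∉ Finset.Icc 1 n := by simp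
  have hlt : ∀ x ∈ Finset.Icc 1 n, x < n + 1 := by
    intro x hx; rw [Finset.mem_Icc] at hx; omega
  have hIcc : insert (n + 1) (Finset.Icc 1 n) = Finset.Icc 1 (n + 1) := by
    ext x; simp only [Finset.mem_insert, Finset.mem_Icc]; omega
  have e1 := mainEquiv ha hlt (show ℓ < n + 1 by omega) k
  have e2 : {π : Finpartition (insert (n + 1) (Finset.Icc 1 n)) //
        π.parts.card = k + 1 ∧ mincond ℓ π} ≃
      {π : Finpartition (Finset.Icc 1 (n + 1)) // π.parts.card = k + 1 ∧ mincond ℓ π} :=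
    Equiv.subtypeEquiv (copyEquiv hIcc) (fun π => Iff.rfl)
  rw [show A (n + 1) ℓ (k + 1) =
    Nat.card {π : Finpartition (Finset.Icc 1 (n + 1)) //
      π.parts.card = k + 1 ∧ mincond ℓ π} from rfl]
  rw [← Nat.card_congr (e1.trans e2), Nat.card_sum]
  congr 1
  rw [Nat.card_eq_fintype_card, Fintype.card_sigma]
  have hfib : ∀ π : {π : Finpartition (Finset.Icc 1 n) // π.parts.card = k + 1 ∧ mincond ℓ π},
      Fintype.card {t // t ∈ π.1.parts} = k + 1 := by
    intro π
    rw [Fintype.card_coe]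
    exact π.2.1
  rw [Finset.sum_congr rfl (fun π _ => hfib π), Finset.sum_const, Finset.card_univ,
    smul_eq_mul, mul_comm]
  rw [A, Nat.card_eq_fintype_card]

lemma A_zero_k (n ℓ : ℕ) (hn : 1 ≤ n) : A n ℓ 0 = 0 := by
  have : IsEmpty {π : Finpartition (Finset.Icc 1 n) // π.parts.card = 0 ∧ mincond ℓ π} := by
    constructor
    rintro ⟨π, hc, -⟩
    have hne : (Finset.Icc 1 n).Nonempty := ⟨1, Finset.mem_Icc.2 ⟨le_refl 1, hn⟩⟩
    have := π.parts_nonempty (by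
      rw [Finset.bot_eq_empty]
      exact Finset.nonempty_iff_ne_empty.1 hne)
    rw [← Finset.card_pos, hc] at this
    omega
  rw [A]
  exact Nat.card_of_isEmpty

lemma natCast_inj_WithBot : Function.Injective (fun i : ℕ => (i : WithBot ℕ)) := by
  intro x y h
  simp only [Nat.cast_withBot] at h
  exact WithBot.coe_injective h

lemma A_diag (n k : ℕ) (hn : 1 ≤ n) : A n n k = if n = k then 1 else 0 := by
  have hcard : (Finset.Icc 1 n).card = n := by rw [Nat.card_Icc]; omega
  split_ifs with h
  · subst h
    rw [A, Nat.card_eq_one_iff_unique]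
    constructor
    · constructor
      rintro ⟨π, hc, -⟩ ⟨π', hc', -⟩
      have key : ∀ (ρ : Finpartition (Finset.Icc 1 n)), ρ.parts.card = n → ρ = ⊥ := by
        intro ρ hρ
        have hsum := ρ.sum_card_parts
        have hone : ∀ t ∈ ρ.parts, t.card = 1 := by
          intro t ht
          by_contra hne
          have h1 : ∀ u ∈ ρ.parts, 1 ≤ u.card :=
            fun u hu => Finset.card_pos.2 (ρ.nonempty_of_mem_parts hu)
          have h2 : 1 < t.card := by
            have := h1 t ht
            omega
          have := Finset.sum_lt_sum (fun u (hu : u ∈ ρ.parts) => h1 u hu) ⟨t, ht, h2⟩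
          rw [hsum, Finset.sum_const, smul_eq_mul, mul_one, hρ, hcard] at this
          omega
        apply Finpartition.ext
        rw [Finpartition.parts_bot]
        ext x
        rw [Finset.mem_map]
        constructor
        · intro hx
          obtain ⟨b, hb⟩ := Finset.card_eq_one.1 (hone x hx)
          exact ⟨b, by rw [← Finset.singleton_subset_iff, ← hb]; exact ρ.le hx, hb.symm⟩
        · rintro ⟨b, hb, rfl⟩
          obtain ⟨t, ht, hbt⟩ := ρ.exists_mem hb
          obtain ⟨c, hc2⟩ := Finset.card_eq_one.1 (hone t ht)
          rw [hc2] at hbt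
          rw [Finset.mem_singleton] at hbt
          subst hbt
          show {b} ∈ ρ.parts
          rw [← hc2]
          exact ht
      apply Subtype.ext
      show π = π'
      rw [key π hc, key π' hc']
    · refine ⟨⟨⊥, ?_, ?_⟩⟩
      · rw [Finpartition.card_bot, hcard]
      · intro i hi
        rw [Finset.mem_Icc] at hi
        refine Finset.mem_image.2 ?_
        refine ⟨{i}, ?_, by rw [Finset.min_singleton]; exact (Nat.cast_withBot i).symm⟩
        rw [Finpartition.parts_bot, Finset.mem_map]
        exact ⟨i, Finset.mem_Icc.2 ⟨hi.1, hi.2⟩, rfl⟩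
  · have : IsEmpty {π : Finpartition (Finset.Icc 1 n) // π.parts.card = k ∧ mincond n π} := by
      constructor
      rintro ⟨π, hc, hm⟩
      have hsub : (Finset.Icc 1 n).image (fun i : ℕ => (i : WithBot ℕ)) ⊆
          π.parts.image Finset.min := by
        intro x hx
        rw [Finset.mem_image] at hx
        obtain ⟨i, hi, rfl⟩ := hx
        exact hm i hi
      have h1 : n ≤ (π.parts.image Finset.min).card := by
        have := Finset.card_le_card hsub
        rwa [Finset.card_image_of_injective _ natCast_inj_WithBot, hcard] at this
      have h2 : (π.parts.image Finset.min).card ≤ k := by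
        rw [← hc]; exact Finset.card_image_le
      have h3 : k ≤ n := by
        have := π.card_parts_le_card
        rwa [hc, hcard] at this
      omega
    simp [A, Nat.card_of_isEmpty]

lemma sum_A (n k : ℕ) : ∑ ℓ ∈ Finset.Icc 1 n, A n ℓ k = Sodd n k := by
  induction n generalizing k with
  | zero => simp [Sodd]
  | succ n ih =>
    cases k with
    | zero =>
      rw [Finset.sum_congr rfl (fun ℓ _ => A_zero_k (n + 1) ℓ (by omega))]
      simp [Sodd]
    | succ k =>
      rw [Finset.sum_Icc_succ_top (by omega : 1 ≤ n + 1)]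
      rw [Finset.sum_congr rfl (fun ℓ hℓ => A_rec n ℓ k (Finset.mem_Icc.1 hℓ).2)]
      rw [Finset.sum_add_distrib, ← Finset.mul_sum, ih k, ih (k + 1),
        A_diag (n + 1) (k + 1) (by omega)]
      show Sodd n k + (k + 1) * Sodd n (k + 1) + _ = Sodd (n + 1) (k + 1)
      rw [show Sodd (n + 1) (k + 1) =
        Sodd n k + (k + 1) * Sodd n (k + 1) + if n = k then 1 else 0 from rfl]
      congr 1
      by_cases h : n = k <;> simp [h]

lemma one_le_min_image {n : ℕ} (π : Finpartition (Finset.Icc 1 n)) :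
    ∀ x ∈ π.parts.image Finset.min, ∃ m : ℕ, 1 ≤ m ∧ x = WithTop.some m := by
  intro x hx
  rw [Finset.mem_image] at hx
  obtain ⟨t, ht, rfl⟩ := hx
  obtain ⟨m, hm⟩ := Finset.min_of_nonempty (π.nonempty_of_mem_parts ht)
  have hmt : m ∈ t := Finset.mem_of_min hm
  have h1 : 1 ≤ m := (Finset.mem_Icc.1 (π.le ht hmt)).1
  exact ⟨m, h1, hm⟩

/-- S_odd(n,k) counts partitions with leader: pairs (ℓ, π) where π is a partition of
{1,...,n} into k blocks B_1,...,B_k ordered by their minima, and ℓ ∈ {1,...,n} with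
min(B_ℓ) = ℓ (i.e. the ℓ-th smallest block minimum equals ℓ). -/
theorem Sodd_eq_partitions_with_leader (n k : ℕ) :
    Nat.card {p : ℕ × Finpartition (Finset.Icc 1 n) //
      1 ≤ p.1 ∧ p.1 ≤ n ∧ p.2.parts.card = k ∧
      ((p.2.parts.image Finset.min).sort (· ≤ ·)).getD (p.1 - 1) ⊥ = (p.1 : WithBot ℕ)} =
    Sodd n k := by
  classical
  have hiff : ∀ (ℓ : ℕ) (π : Finpartition (Finset.Icc 1 n)), 1 ≤ ℓ →
      (((π.parts.image Finset.min).sort (· ≤ ·)).getD (ℓ - 1) ⊥ = (ℓ : WithBot ℕ) ↔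
        mincond ℓ π) := by
    intro ℓ π hℓ
    exact sort_getD_eq_iff _ (one_le_min_image π) ℓ hℓ
  have e : {p : ℕ × Finpartition (Finset.Icc 1 n) //
      1 ≤ p.1 ∧ p.1 ≤ n ∧ p.2.parts.card = k ∧
      ((p.2.parts.image Finset.min).sort (· ≤ ·)).getD (p.1 - 1) ⊥ = (p.1 : WithBot ℕ)} ≃
      Σ ℓ : (Finset.Icc 1 n : Finset ℕ),
        {π : Finpartition (Finset.Icc 1 n) // π.parts.card = k ∧ mincond ℓ.1 π} :=
    { toFun := fun x => match x with
        | ⟨⟨ℓ, π⟩, h⟩ => ⟨⟨ℓ, Finset.mem_Icc.2 ⟨h.1, h.2.1⟩⟩,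
            ⟨π, h.2.2.1, (hiff ℓ π h.1).1 h.2.2.2⟩⟩
      invFun := fun x => match x with
        | ⟨⟨ℓ, hℓ⟩, ⟨π, hc, hm⟩⟩ => ⟨(ℓ, π),
            ⟨(Finset.mem_Icc.1 hℓ).1, (Finset.mem_Icc.1 hℓ).2, hc,
              (hiff ℓ π (Finset.mem_Icc.1 hℓ).1).2 hm⟩⟩
      left_inv := fun x => match x with
        | ⟨⟨ℓ, π⟩, h⟩ => rfl
      right_inv := fun x => match x with
        | ⟨⟨ℓ, hℓ⟩, ⟨π, hc, hm⟩⟩ => rfl }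
  rw [Nat.card_congr e, Nat.card_eq_fintype_card, Fintype.card_sigma]
  have hA : ∀ ℓ : (Finset.Icc 1 n : Finset ℕ),
      Fintype.card {π : Finpartition (Finset.Icc 1 n) // π.parts.card = k ∧ mincond ℓ.1 π} =
        A n ℓ.1 k := fun ℓ => (Nat.card_eq_fintype_card).symm
  simp only [hA]
  rw [← sum_A n k, Finset.univ_eq_attach]
  exact Finset.sum_attach _ (fun ℓ => A n ℓ k)
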